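/- Supersymmetric semigroups are compound: if a_0,...,a_k are pairwise coprime positive integers, A=(a_1,...,a_k) and B=(a_0,...,a_{k−1}), then (A,B) is a suitable pair, the compound sequence G(A,B) equals {(a_0···a_k)/a_i : 0≤i≤k}, the genus of the generated semigroup is (1 + k·∏ a_i − Σ_i (∏ a_j)/a_i)/2, and the Frobenius number is k·∏ a_i − Σ_i (∏ a_j)/a_i. -/

import Mathlib

open Finset

/-- The compound sequence: `g k A B i = b₁⋯bᵢ · aᵢ₊₁⋯a_k` (0-indexed: `A j = a_{j+1}`,
`B j = b_{j+1}`). -/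
def compoundSeq (k : ℕ) (A B : ℕ → ℕ) (i : ℕ) : ℕ :=
  (∏ j ∈ Finset.range i, B j) * (∏ j ∈ Finset.Ico i k, A j)

/-- `n : ℤ` is representable as a nonnegative integer combination of `g₀,…,g_k`. -/
def RepZ (k : ℕ) (A B : ℕ → ℕ) (n : ℤ) : Prop :=
  ∃ c : Fin (k + 1) → ℕ, n = ∑ i : Fin (k + 1), (c i : ℤ) * (compoundSeq k A B (i : ℕ) : ℤ)

def gg (k : ℕ) (a : ℕ → ℕ) (i : ℕ) : ℕ := compoundSeq k (fun t => a (t + 1)) a i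

def PP (k : ℕ) (a : ℕ → ℕ) : ℕ := ∏ t ∈ Finset.range (k + 1), a t

section Aux
variable {k : ℕ} {a : ℕ → ℕ}

lemma gg_mul {i : ℕ} (hi : i ≤ k) : gg k a i * a i = PP k a := by
  unfold gg PP compoundSeq
  have h1 : ∏ j ∈ Ico i k, a (j + 1) = ∏ j ∈ Ico (i + 1) (k + 1), a j :=
    Finset.prod_Ico_add' a i k 1
  have h2 : ∏ t ∈ range (k + 1), a t = (∏ j ∈ Ico 0 i, a j) * ∏ j ∈ Ico i (k + 1), a j := by
    rw [Finset.prod_Ico_consecutive a (Nat.zero_le i) (show i ≤ k + 1 by omega), range_eq_Ico]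
  rw [h1, h2, Finset.prod_eq_prod_Ico_succ_bot (show i < k + 1 by omega), range_eq_Ico]
  ring

lemma PP_pos (hpos : ∀ i, i ≤ k → 0 < a i) : 0 < PP k a :=
  Finset.prod_pos fun t ht => hpos t (by simpa using Nat.lt_succ_iff.mp (mem_range.mp ht))

lemma gg_pos (hpos : ∀ i, i ≤ k → 0 < a i) {i : ℕ} (hi : i ≤ k) : 0 < gg k a i := by
  unfold gg compoundSeq
  apply mul_pos
  · exact Finset.prod_pos fun j hj => hpos j (by have := mem_range.mp hj; omega)
  · exact Finset.prod_pos fun j hj => hpos (j + 1) (by have := (mem_Ico.mp hj).2; omega)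

lemma a_dvd_gg {i j : ℕ} (hi : i ≤ k) (hj : j ≤ k) (hij : i ≠ j) : a i ∣ gg k a j := by
  unfold gg compoundSeq
  rcases lt_or_gt_of_ne hij with h | h
  · exact Dvd.dvd.mul_right (Finset.dvd_prod_of_mem a (mem_range.mpr h)) _
  · have h1 : i - 1 ∈ Ico j k := by rw [mem_Ico]; omega
    have h2 := Finset.dvd_prod_of_mem (fun t => a (t + 1)) h1
    simp only [show i - 1 + 1 = i from by omega] at h2
    exact h2.mul_left _

lemma gg_coprime (hcop : ∀ i j, i ≤ k → j ≤ k → i ≠ j → Nat.Coprime (a i) (a j))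
    {i : ℕ} (hi : i ≤ k) : Nat.Coprime (gg k a i) (a i) := by
  unfold gg compoundSeq
  apply Nat.Coprime.mul
  · exact Nat.Coprime.prod_left fun j hj =>
      hcop j i (by have := mem_range.mp hj; omega) hi (by have := mem_range.mp hj; omega)
  · exact Nat.Coprime.prod_left fun j hj =>
      hcop (j + 1) i (by have := (mem_Ico.mp hj).2; omega) hi
        (by have := (mem_Ico.mp hj).1; omega)

end Aux

section Decomp
variable {k : ℕ} {a : ℕ → ℕ}

lemma exists_c (hpos : ∀ i, i ≤ k → 0 < a i)
    (hcop : ∀ i j, i ≤ k → j ≤ k → i ≠ j → Nat.Coprime (a i) (a j))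
    (n : ℤ) (i : ℕ) :
    ∃ c : ℕ, i ≤ k → (c < a i ∧ (a i : ℤ) ∣ n - (c : ℤ) * (gg k a i : ℤ)) := by
  by_cases hi : i ≤ k
  · obtain ⟨u, v, huv⟩ := (gg_coprime hcop hi).isCoprime
    have hA : (0 : ℤ) < (a i : ℤ) := by exact_mod_cast hpos i hi
    refine ⟨((n * u) % (a i : ℤ)).toNat, fun _ => ⟨?_, ?_⟩⟩
    · have h1 := Int.emod_lt_of_pos (n * u) hA
      have h2 := Int.emod_nonneg (n * u) (ne_of_gt hA)
      omega
    · have h2 := Int.emod_nonneg (n * u) (ne_of_gt hA)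
      rw [Int.toNat_of_nonneg h2]
      have hd : (n * u) % (a i : ℤ) = n * u - (a i : ℤ) * ((n * u) / (a i : ℤ)) := by
        rw [Int.emod_def]
      refine ⟨n * v + ((n * u) / (a i : ℤ)) * (gg k a i : ℤ), ?_⟩
      rw [hd]
      linear_combination (-n) * huv
  · exact ⟨0, fun h => absurd h hi⟩

lemma exists_decomp (hpos : ∀ i, i ≤ k → 0 < a i)
    (hcop : ∀ i j, i ≤ k → j ≤ k → i ≠ j → Nat.Coprime (a i) (a j))
    (n : ℤ) :
    ∃ (lam : ℤ) (c : ℕ → ℕ), (∀ i, i ≤ k → c i < a i) ∧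
      n = lam * (PP k a : ℤ) + ∑ i ∈ range (k + 1), (c i : ℤ) * (gg k a i : ℤ) := by
  choose c hc using exists_c hpos hcop n
  set m : ℤ := n - ∑ i ∈ range (k + 1), (c i : ℤ) * (gg k a i : ℤ) with hm
  have hdvd : ∀ i ∈ range (k + 1), (a i : ℤ) ∣ m := by
    intro i hi
    have hik : i ≤ k := by have := mem_range.mp hi; omega
    have h1 : m = (n - (c i : ℤ) * (gg k a i : ℤ)) -
        ∑ j ∈ (range (k + 1)).erase i, (c j : ℤ) * (gg k a j : ℤ) := by
      rw [hm, ← Finset.add_sum_erase _ _ hi]; ring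
    rw [h1]
    refine dvd_sub ((hc i hik).2) (Finset.dvd_sum fun j hj => Dvd.dvd.mul_left ?_ _)
    have hjk : j ≤ k := by have := mem_range.mp (Finset.mem_of_mem_erase hj); omega
    exact_mod_cast Int.natCast_dvd_natCast.mpr
      (a_dvd_gg hik hjk (Finset.ne_of_mem_erase hj).symm)
  have hPdvd : (PP k a : ℤ) ∣ m := by
    have hcast : ((PP k a : ℕ) : ℤ) = ∏ t ∈ range (k + 1), (a t : ℤ) := by
      unfold PP; push_cast; ring
    rw [hcast]
    refine Finset.prod_dvd_of_coprime ?_ hdvd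
    intro i hi j hj hij
    have hik : i ≤ k := by have := mem_range.mp (by exact_mod_cast hi : i ∈ range (k+1)); omega
    have hjk : j ≤ k := by have := mem_range.mp (by exact_mod_cast hj : j ∈ range (k+1)); omega
    exact (hcop i j hik hjk hij).isCoprime
  refine ⟨m / (PP k a : ℤ), c, fun i hi => (hc i hi).1, ?_⟩
  rw [Int.ediv_mul_cancel hPdvd]
  omega

lemma decomp_unique (hpos : ∀ i, i ≤ k → 0 < a i)
    (hcop : ∀ i j, i ≤ k → j ≤ k → i ≠ j → Nat.Coprime (a i) (a j))
    {lam lam' : ℤ} {c c' : ℕ → ℕ}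
    (hc : ∀ i, i ≤ k → c i < a i) (hc' : ∀ i, i ≤ k → c' i < a i)
    (h : lam * (PP k a : ℤ) + ∑ i ∈ range (k + 1), (c i : ℤ) * (gg k a i : ℤ) =
      lam' * (PP k a : ℤ) + ∑ i ∈ range (k + 1), (c' i : ℤ) * (gg k a i : ℤ)) :
    lam = lam' := by
  have key : ∀ i, i ≤ k → c i = c' i := by
    intro i hik
    have hi : i ∈ range (k + 1) := mem_range.mpr (by omega)
    have e1 := Finset.add_sum_erase (range (k + 1)) (fun j => (c j : ℤ) * (gg k a j : ℤ)) hi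
    have e2 := Finset.add_sum_erase (range (k + 1)) (fun j => (c' j : ℤ) * (gg k a j : ℤ)) hi
    have h2 : ((c i : ℤ) - (c' i : ℤ)) * (gg k a i : ℤ) =
        (lam' - lam) * (PP k a : ℤ) +
        (∑ j ∈ (range (k + 1)).erase i, (c' j : ℤ) * (gg k a j : ℤ) -
          ∑ j ∈ (range (k + 1)).erase i, (c j : ℤ) * (gg k a j : ℤ)) := by
      linarith [h, e1, e2]
    have hdvd : (a i : ℤ) ∣ ((c i : ℤ) - (c' i : ℤ)) * (gg k a i : ℤ) := by
      rw [h2]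
      refine dvd_add (Dvd.dvd.mul_left ?_ _) (dvd_sub
        (Finset.dvd_sum fun j hj => Dvd.dvd.mul_left ?_ _)
        (Finset.dvd_sum fun j hj => Dvd.dvd.mul_left ?_ _))
      · exact_mod_cast Int.natCast_dvd_natCast.mpr
          (by unfold PP; exact Finset.dvd_prod_of_mem a hi)
      all_goals {
        have hjk : j ≤ k := by have := mem_range.mp (Finset.mem_of_mem_erase hj); omega
        exact_mod_cast Int.natCast_dvd_natCast.mpr
          (a_dvd_gg hik hjk (Finset.ne_of_mem_erase hj).symm) }
    have hdvd2 : (a i : ℤ) ∣ ((c i : ℤ) - (c' i : ℤ)) :=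
      (Nat.isCoprime_iff_coprime.mpr ((gg_coprime hcop hik).symm)).dvd_of_dvd_mul_right hdvd
    have h3 : (c i : ℤ) - (c' i : ℤ) = 0 := by
      refine Int.eq_zero_of_abs_lt_dvd hdvd2 (abs_lt.mpr ⟨?_, ?_⟩)
      · have := hc' i hik; omega
      · have := hc i hik; omega
    omega
  have hsum : ∑ i ∈ range (k + 1), (c i : ℤ) * (gg k a i : ℤ) =
      ∑ i ∈ range (k + 1), (c' i : ℤ) * (gg k a i : ℤ) :=
    Finset.sum_congr rfl fun i hi => by
      rw [key i (by have := mem_range.mp hi; omega)]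
  have hP : (0 : ℤ) < (PP k a : ℤ) := by exact_mod_cast PP_pos hpos
  have : lam * (PP k a : ℤ) = lam' * (PP k a : ℤ) := by linarith
  exact mul_right_cancel₀ (ne_of_gt hP) this

end Decomp

section Rep
variable {k : ℕ} {a : ℕ → ℕ}

lemma repZ_iff_lam (hpos : ∀ i, i ≤ k → 0 < a i)
    (hcop : ∀ i j, i ≤ k → j ≤ k → i ≠ j → Nat.Coprime (a i) (a j))
    {n lam : ℤ} {c : ℕ → ℕ}
    (hc : ∀ i, i ≤ k → c i < a i)
    (heq : n = lam * (PP k a : ℤ) + ∑ i ∈ range (k + 1), (c i : ℤ) * (gg k a i : ℤ)) :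
    RepZ k (fun t => a (t + 1)) a n ↔ 0 ≤ lam := by
  have h0 : ∀ d : ℕ → ℕ, ∑ j ∈ range (k + 1), (d j : ℤ) * (gg k a j : ℤ) =
      (d 0 : ℤ) * (gg k a 0 : ℤ) + ∑ j ∈ Ico 1 (k + 1), (d j : ℤ) * (gg k a j : ℤ) := by
    intro d
    rw [range_eq_Ico, Finset.sum_eq_sum_Ico_succ_bot (show 0 < k + 1 by omega)]
  have hP0 : (PP k a : ℤ) = (gg k a 0 : ℤ) * (a 0 : ℤ) := by
    exact_mod_cast (gg_mul (Nat.zero_le k)).symm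
  constructor
  · rintro ⟨d, hd⟩
    set e : ℕ → ℕ := fun j => if h : j < k + 1 then d ⟨j, h⟩ else 0 with he
    have hd2 : n = ∑ j ∈ range (k + 1), (e j : ℤ) * (gg k a j : ℤ) := by
      rw [hd, ← Fin.sum_univ_eq_sum_range (fun j => (e j : ℤ) * (gg k a j : ℤ)) (k + 1)]
      refine Finset.sum_congr rfl fun i _ => ?_
      simp only [he, i.isLt, dif_pos]
      rfl
    have hd3 : n = (∑ j ∈ range (k + 1), ((e j / a j : ℕ) : ℤ)) * (PP k a : ℤ) +
        ∑ j ∈ range (k + 1), ((e j % a j : ℕ) : ℤ) * (gg k a j : ℤ) := by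
      rw [hd2, Finset.sum_mul, ← Finset.sum_add_distrib]
      refine Finset.sum_congr rfl fun j hj => ?_
      have hjk : j ≤ k := by have := mem_range.mp hj; omega
      have h1 : a j * (e j / a j) + e j % a j = e j := Nat.div_add_mod (e j) (a j)
      have h2 : ((gg k a j : ℤ)) * (a j : ℤ) = (PP k a : ℤ) := by
        exact_mod_cast gg_mul hjk
      calc (e j : ℤ) * (gg k a j : ℤ)
          = ((a j * (e j / a j) + e j % a j : ℕ) : ℤ) * (gg k a j : ℤ) := by rw [h1]
        _ = ((e j / a j : ℕ) : ℤ) * ((gg k a j : ℤ) * (a j : ℤ)) +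
            ((e j % a j : ℕ) : ℤ) * (gg k a j : ℤ) := by push_cast; ring
        _ = ((e j / a j : ℕ) : ℤ) * (PP k a : ℤ) +
            ((e j % a j : ℕ) : ℤ) * (gg k a j : ℤ) := by rw [h2]
    have hlam : lam = ∑ j ∈ range (k + 1), ((e j / a j : ℕ) : ℤ) :=
      decomp_unique hpos hcop hc (fun i hi => Nat.mod_lt _ (hpos i hi))
        (heq.symm.trans hd3)
    rw [hlam]
    exact Finset.sum_nonneg fun j _ => by positivity
  · intro hlam
    refine ⟨fun i => if (i : ℕ) = 0 then c 0 + lam.toNat * a 0 else c (i : ℕ), ?_⟩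
    have hsp : ∑ i : Fin (k + 1),
        (((if (i : ℕ) = 0 then c 0 + lam.toNat * a 0 else c (i : ℕ)) : ℕ) : ℤ) *
          (compoundSeq k (fun t => a (t + 1)) a (i : ℕ) : ℤ) =
        ∑ j ∈ range (k + 1),
          (((if j = 0 then c 0 + lam.toNat * a 0 else c j) : ℕ) : ℤ) * (gg k a j : ℤ) :=
      Fin.sum_univ_eq_sum_range
        (fun j => (((if j = 0 then c 0 + lam.toNat * a 0 else c j) : ℕ) : ℤ) *
          (gg k a j : ℤ)) (k + 1)
    rw [hsp, h0, heq, h0]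
    have hIco : ∑ j ∈ Ico 1 (k + 1),
        (((if j = 0 then c 0 + lam.toNat * a 0 else c j) : ℕ) : ℤ) * (gg k a j : ℤ) =
        ∑ j ∈ Ico 1 (k + 1), (c j : ℤ) * (gg k a j : ℤ) := by
      refine Finset.sum_congr rfl fun j hj => ?_
      have : j ≠ 0 := by have := (mem_Ico.mp hj).1; omega
      rw [if_neg this]
    rw [hIco]
    have htn : ((lam.toNat : ℕ) : ℤ) = lam := Int.toNat_of_nonneg hlam
    push_cast
    rw [htn, hP0]
    ring

lemma repZ_nonneg {n : ℤ} (h : RepZ k (fun t => a (t + 1)) a n) : 0 ≤ n := by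
  obtain ⟨c, hc⟩ := h
  rw [hc]
  exact Finset.sum_nonneg fun i _ => by positivity

end Rep

section Frob
variable {k : ℕ} {a : ℕ → ℕ}

lemma F_decomp (hpos : ∀ i, i ≤ k → 0 < a i) :
    (k : ℤ) * (PP k a : ℤ) - ∑ i ∈ range (k + 1), (gg k a i : ℤ) =
    (-1) * (PP k a : ℤ) + ∑ i ∈ range (k + 1), ((a i - 1 : ℕ) : ℤ) * (gg k a i : ℤ) := by
  have h1 : ∑ i ∈ range (k + 1), ((a i - 1 : ℕ) : ℤ) * (gg k a i : ℤ) =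
      ∑ i ∈ range (k + 1), ((PP k a : ℤ) - (gg k a i : ℤ)) := by
    refine Finset.sum_congr rfl fun i hi => ?_
    have hik : i ≤ k := by have := mem_range.mp hi; omega
    have h2 : ((gg k a i : ℤ)) * (a i : ℤ) = (PP k a : ℤ) := by exact_mod_cast gg_mul hik
    have h3 : ((a i - 1 : ℕ) : ℤ) = (a i : ℤ) - 1 := by
      have := hpos i hik; omega
    rw [h3, ← h2]; ring
  rw [h1, Finset.sum_sub_distrib, Finset.sum_const, card_range]
  push_cast
  ring

lemma rep_symm (hpos : ∀ i, i ≤ k → 0 < a i)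
    (hcop : ∀ i j, i ≤ k → j ≤ k → i ≠ j → Nat.Coprime (a i) (a j)) (n : ℤ) :
    RepZ k (fun t => a (t + 1)) a
      (((k : ℤ) * (PP k a : ℤ) - ∑ i ∈ range (k + 1), (gg k a i : ℤ)) - n) ↔
    ¬ RepZ k (fun t => a (t + 1)) a n := by
  obtain ⟨lam, c, hc, heq⟩ := exists_decomp hpos hcop n
  have h1 := repZ_iff_lam hpos hcop hc heq
  have heq2 : ((k : ℤ) * (PP k a : ℤ) - ∑ i ∈ range (k + 1), (gg k a i : ℤ)) - n =
      (-1 - lam) * (PP k a : ℤ) +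
      ∑ i ∈ range (k + 1), ((a i - 1 - c i : ℕ) : ℤ) * (gg k a i : ℤ) := by
    have h3 : ∑ i ∈ range (k + 1), ((a i - 1 - c i : ℕ) : ℤ) * (gg k a i : ℤ) =
        ∑ i ∈ range (k + 1),
          (((a i - 1 : ℕ) : ℤ) * (gg k a i : ℤ) - (c i : ℤ) * (gg k a i : ℤ)) := by
      refine Finset.sum_congr rfl fun i hi => ?_
      have hik : i ≤ k := by have := mem_range.mp hi; omega
      have h4 : ((a i - 1 - c i : ℕ) : ℤ) = ((a i - 1 : ℕ) : ℤ) - (c i : ℤ) := by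
        have := hc i hik; have := hpos i hik; omega
      rw [h4]; ring
    rw [h3, Finset.sum_sub_distrib, F_decomp hpos, heq]
    ring
  have h2 := repZ_iff_lam hpos hcop
    (fun i hi => by have := hpos i hi; have := hc i hi; omega) heq2
  rw [h1, h2]
  omega

lemma nonrep_le (hpos : ∀ i, i ≤ k → 0 < a i)
    (hcop : ∀ i j, i ≤ k → j ≤ k → i ≠ j → Nat.Coprime (a i) (a j))
    {n : ℤ} (h : ¬ RepZ k (fun t => a (t + 1)) a n) :
    n ≤ (k : ℤ) * (PP k a : ℤ) - ∑ i ∈ range (k + 1), (gg k a i : ℤ) := by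
  obtain ⟨lam, c, hc, heq⟩ := exists_decomp hpos hcop n
  have hlam : lam < 0 := by
    by_contra hl
    exact h ((repZ_iff_lam hpos hcop hc heq).mpr (not_lt.mp hl))
  rw [F_decomp hpos, heq]
  have hP : (0 : ℤ) ≤ (PP k a : ℤ) := Int.natCast_nonneg _
  have hsum : ∑ i ∈ range (k + 1), (c i : ℤ) * (gg k a i : ℤ) ≤
      ∑ i ∈ range (k + 1), ((a i - 1 : ℕ) : ℤ) * (gg k a i : ℤ) := by
    refine Finset.sum_le_sum fun i hi => ?_
    have hik : i ≤ k := by have := mem_range.mp hi; omega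
    refine mul_le_mul_of_nonneg_right ?_ (Int.natCast_nonneg _)
    have := hc i hik; omega
  have hmul : lam * (PP k a : ℤ) ≤ (-1) * (PP k a : ℤ) :=
    mul_le_mul_of_nonneg_right (by omega) hP
  linarith

end Frob

/-- Supersymmetric semigroups are compound: for pairwise coprime positive `a₀,…,a_k`, with
`A = (a₁,…,a_k)` and `B = (a₀,…,a_{k−1})`, the pair `(A,B)` is suitable, the compound
sequence is `gᵢ = (a₀⋯a_k)/aᵢ`, the genus is `(1 + k·∏aᵢ − Σᵢ(∏aⱼ)/aᵢ)/2`, and the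
Frobenius number is `k·∏aᵢ − Σᵢ(∏aⱼ)/aᵢ`. -/
theorem supersymmetric_compound (k : ℕ) (a : ℕ → ℕ)
    (hpos : ∀ i, i ≤ k → 0 < a i)
    (hcop : ∀ i j, i ≤ k → j ≤ k → i ≠ j → Nat.Coprime (a i) (a j))
    (NR : Finset ℕ)
    (hNR : ∀ n : ℕ, n ∈ NR ↔
      ¬ ∃ c : Fin (k + 1) → ℕ,
        n = ∑ i : Fin (k + 1), c i * compoundSeq k (fun t => a (t + 1)) a (i : ℕ)) :
    -- (A,B) is a suitable pair
    (∀ i j, j ≤ i → i < k → Nat.Coprime (a (i + 1)) (a j)) ∧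
    -- gᵢ = (a₀⋯a_k)/aᵢ, expressed multiplicatively
    (∀ i, i ≤ k → compoundSeq k (fun t => a (t + 1)) a i * a i = ∏ t ∈ Finset.range (k + 1), a t) ∧
    -- genus formula
    ((2 * NR.card : ℤ) = 1 + k * (∏ t ∈ Finset.range (k + 1), (a t : ℤ)) -
        ∑ i ∈ Finset.range (k + 1), (compoundSeq k (fun t => a (t + 1)) a i : ℤ)) ∧
    -- Frobenius number
    (¬ RepZ k (fun t => a (t + 1)) a
        ((k : ℤ) * (∏ t ∈ Finset.range (k + 1), (a t : ℤ)) -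
          ∑ i ∈ Finset.range (k + 1), (compoundSeq k (fun t => a (t + 1)) a i : ℤ)) ∧
      ∀ m : ℤ,
        ((k : ℤ) * (∏ t ∈ Finset.range (k + 1), (a t : ℤ)) -
            ∑ i ∈ Finset.range (k + 1), (compoundSeq k (fun t => a (t + 1)) a i : ℤ)) < m →
          RepZ k (fun t => a (t + 1)) a m) := by
  classical
  have hggdef : ∀ i : ℕ, compoundSeq k (fun t => a (t + 1)) a i = gg k a i := fun _ => rfl
  have hPc : (∏ t ∈ Finset.range (k + 1), ((a t : ℕ) : ℤ)) = ((PP k a : ℕ) : ℤ) := by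
    unfold PP; push_cast; ring
  simp only [hggdef, hPc]
  -- name the Frobenius number as an opaque variable
  obtain ⟨Fz, hFz⟩ : ∃ F : ℤ, F = (k : ℤ) * (PP k a : ℤ) -
      ∑ i ∈ range (k + 1), (gg k a i : ℤ) := ⟨_, rfl⟩
  rw [← hFz]
  -- representability transfer
  have hrepNat : ∀ n : ℕ, n ∉ NR ↔ RepZ k (fun t => a (t + 1)) a (n : ℤ) := by
    intro n
    rw [hNR, not_not]
    constructor
    · rintro ⟨c, hc⟩
      exact ⟨c, by rw [hc]; push_cast; rfl⟩
    · rintro ⟨c, hc⟩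
      exact ⟨c, by exact_mod_cast hc⟩
  have hsymm : ∀ n : ℤ, RepZ k (fun t => a (t + 1)) a (Fz - n) ↔
      ¬ RepZ k (fun t => a (t + 1)) a n := by
    intro n; rw [hFz]; exact rep_symm hpos hcop n
  have hrep0 : RepZ k (fun t => a (t + 1)) a 0 := ⟨fun _ => 0, by simp⟩
  have hF_notrep : ¬ RepZ k (fun t => a (t + 1)) a Fz :=
    (hsymm Fz).mp (by simpa using hrep0)
  have hneg1 : ¬ RepZ k (fun t => a (t + 1)) a (-1) := fun h => by
    have := repZ_nonneg h; omega
  have hF1 : (0 : ℤ) ≤ Fz + 1 := by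
    have h2 := (hsymm (-1)).mpr hneg1
    have h3 := repZ_nonneg h2
    linarith
  obtain ⟨Fn, hFn⟩ : ∃ m : ℕ, (m : ℤ) = Fz + 1 := ⟨(Fz + 1).toNat, Int.toNat_of_nonneg hF1⟩
  have hNRsub : NR ⊆ range Fn := by
    intro n hn
    have h1 : ¬ RepZ k (fun t => a (t + 1)) a (n : ℤ) := fun hr => ((hrepNat n).mpr hr) hn
    have h2 : (n : ℤ) ≤ Fz := hFz ▸ nonrep_le hpos hcop h1
    exact mem_range.mpr (by omega)
  have hcard1 : NR.card + ((range Fn).filter (fun n => n ∉ NR)).card = Fn := by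
    have hNReq : NR = (range Fn).filter (fun n => n ∈ NR) := by
      ext n
      simp only [mem_filter]
      exact ⟨fun h => ⟨hNRsub h, h⟩, fun h => h.2⟩
    nth_rewrite 1 [hNReq]
    have h5 := Finset.card_filter_add_card_filter_not (s := range Fn)
      (p := fun n => n ∈ NR)
    rw [card_range] at h5
    exact h5
  have hbij : NR.card = ((range Fn).filter (fun n => n ∉ NR)).card := by
    refine Finset.card_nbij' (fun n => Fn - 1 - n) (fun n => Fn - 1 - n) ?_ ?_ ?_ ?_
    · intro n hn
      have hlt : n < Fn := mem_range.mp (hNRsub hn)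
      have h1 : ¬ RepZ k (fun t => a (t + 1)) a (n : ℤ) := fun hr => ((hrepNat n).mpr hr) hn
      have h2 := (hsymm (n : ℤ)).mpr h1
      have hcast : ((Fn - 1 - n : ℕ) : ℤ) = Fz - n := by omega
      simp only [mem_coe, mem_filter, mem_range]
      refine ⟨by omega, ?_⟩
      rw [hrepNat, hcast]
      exact h2
    · intro m hm
      obtain ⟨hmr, hmn⟩ := mem_filter.mp hm
      have hlt : m < Fn := mem_range.mp hmr
      have h1 := (hrepNat m).mp hmn
      have h2 : ¬ RepZ k (fun t => a (t + 1)) a (Fz - m) := fun h => ((hsymm m).mp h) h1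
      have hcast : ((Fn - 1 - m : ℕ) : ℤ) = Fz - m := by omega
      by_contra hc
      exact h2 (hcast ▸ (hrepNat _).mp hc)
    · intro n hn
      have := mem_range.mp (hNRsub hn)
      show Fn - 1 - (Fn - 1 - n) = n
      omega
    · intro m hm
      have := mem_range.mp (mem_filter.mp hm).1
      show Fn - 1 - (Fn - 1 - m) = m
      omega
  refine ⟨fun i j hji hik => hcop (i + 1) j (by omega) (by omega) (by omega),
    fun i hi => gg_mul hi, ?_, hF_notrep, ?_⟩
  · have h2c : 2 * NR.card = Fn := by omega
    have h3 : 2 * (NR.card : ℤ) = (Fn : ℤ) := by exact_mod_cast congrArg (Nat.cast : ℕ → ℤ) h2c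
    linarith [hFz, hFn]
  · intro m hm
    by_contra hr
    have := nonrep_le hpos hcop hr
    rw [← hFz] at this
    omega
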